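/- For n ≥ 2 players, there is no anonymous backoff acknowledgment-based protocol f that is in equilibrium and for which the expected latency of each player using f (when all players use f) is finite. -/

import Mathlib

open scoped ENNReal

namespace Contention

/-- An acknowledgment-based protocol: maps a player's personal transmission history
(the list of her own past transmission indicators, oldest slot first) to the
probability of transmitting in the next slot. -/
abbrev Protocol : Type := List Bool → ℝ

/-- A protocol is valid if it always prescribes a probability in `[0,1]`. -/
def ValidProtocol (f : Protocol) : Prop := ∀ h : List Bool, 0 ≤ f h ∧ f h ≤ 1

/-- A joint transmission history: the list of transmission vectors, oldest slot first. -/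
abbrev Hist (n : ℕ) : Type := List (Fin n → Bool)

/-- The personal transmission history of player `i` extracted from a joint history. -/
def personal {n : ℕ} (h : Hist n) (i : Fin n) : List Bool := h.map fun v => v i

/-- Player `i` transmits alone (hence successfully) in the slot with transmission vector `v`. -/
def alone {n : ℕ} (v : Fin n → Bool) (i : Fin n) : Prop :=
  v i = true ∧ ∀ j : Fin n, j ≠ i → v j = false

instance {n : ℕ} (v : Fin n → Bool) (i : Fin n) : Decidable (alone v i) := by
  unfold alone; infer_instance

/-- Player `i` is still pending after joint history `h` (she never transmitted alone). -/
def pending {n : ℕ} (h : Hist n) (i : Fin n) : Prop := ∀ v ∈ h, ¬ alone v i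

instance {n : ℕ} (h : Hist n) (i : Fin n) : Decidable (pending h i) := by
  unfold pending; infer_instance

/-- Probability that the next slot has transmission vector `v`, given joint history `h`:
each pending player transmits independently with the probability her protocol assigns to
her personal history, and players that already succeeded stay quiet. -/
noncomputable def stepProb {n : ℕ} (F : Fin n → Protocol) (h : Hist n) (v : Fin n → Bool) : ℝ :=
  ∏ i : Fin n,
    if pending h i then
      (if v i = true then F i (personal h i) else 1 - F i (personal h i))
    else
      (if v i = true then 0 else 1)

/-- Probability that, starting after joint history `h`, the next `e.length` slots produce
exactly the extension `e`. -/
noncomputable def contProb {n : ℕ} (F : Fin n → Protocol) (h e : Hist n) : ℝ :=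
  ∏ t ∈ Finset.range e.length, stepProb F (h ++ e.take t) (e.getD t fun _ => false)

/-- Probability that the first `h.length` slots produce exactly the joint history `h`. -/
noncomputable def histProb {n : ℕ} (F : Fin n → Protocol) (h : Hist n) : ℝ := contProb F [] h

/-- Conditional probability, given joint history `h`, that player `i` is still pending
after `s` further slots. -/
noncomputable def condPendProb {n : ℕ} (F : Fin n → Protocol) (h : Hist n) (i : Fin n)
    (s : ℕ) : ℝ :=
  ∑ e : Fin s → Fin n → Bool,
    if pending (h ++ List.ofFn e) i then contProb F h (List.ofFn e) else 0

/-- Conditional expected latency `E[Tᵢ | h]` of player `i` given joint history `h`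
(`Tᵢ` is the first slot in which `i` transmits alone), computed via
`E[Tᵢ | h] = ∑_{s ≥ 0} Pr(Tᵢ > s | h)`; for `s ≤ h.length` the event `Tᵢ > s` is
determined by `h`, and for larger `s` its probability is `condPendProb`. -/
noncomputable def condLatency {n : ℕ} (F : Fin n → Protocol) (h : Hist n) (i : Fin n) : ℝ≥0∞ :=
  ∑' s : ℕ,
    if s ≤ h.length then (if pending (h.take s) i then 1 else 0)
    else ENNReal.ofReal (condPendProb F h i (s - h.length))

/-- Conditional expected number of further slots until player `i` succeeds, given joint
history `h` (the slot of the successful transmission itself is counted). -/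
noncomputable def condRemaining {n : ℕ} (F : Fin n → Protocol) (h : Hist n) (i : Fin n) : ℝ≥0∞ :=
  ∑' s : ℕ, ENNReal.ofReal (condPendProb F h i s)

/-- A profile of protocols is in equilibrium if after no joint history (arising with
positive probability) can a player strictly decrease her conditional expected latency
by unilaterally switching to another (valid) protocol. -/
def IsEquilibrium {n : ℕ} (F : Fin n → Protocol) : Prop :=
  ∀ i : Fin n, ∀ h : Hist n, 0 < histProb F h →
    ∀ g : Protocol, ValidProtocol g →
      condLatency F h i ≤ condLatency (Function.update F i g) h i

end Contention

namespace Contention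

/-- A backoff protocol: the transmission probability depends only on the number `k` of
the player's own unsuccessful transmission attempts so far (for a pending player, every
past transmission was unsuccessful), and equals `q k`. -/
def backoffProtocol (q : ℕ → ℝ) : Protocol := fun h => q (h.count true)

-- ==== aux lemmas ====
section Aux

variable {n : ℕ}

lemma personal_length (h : Hist n) (i : Fin n) : (personal h i).length = h.length :=
  List.length_map _

lemma personal_append (h e : Hist n) (i : Fin n) :
    personal (h ++ e) i = personal h i ++ personal e i := List.map_append

lemma stepProb_nonneg {F : Fin n → Protocol} (hF : ∀ j, ValidProtocol (F j))
    (h : Hist n) (v : Fin n → Bool) : 0 ≤ stepProb F h v := by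
  apply Finset.prod_nonneg
  intro j _
  obtain ⟨h0, h1⟩ := hF j (personal h j)
  split_ifs <;> linarith

lemma stepProb_sum {F : Fin n → Protocol} (h : Hist n) :
    ∑ v : Fin n → Bool, stepProb F h v = 1 := by
  classical
  have key : ∀ φ : Fin n → Bool → ℝ, (∀ j, φ j true + φ j false = 1) →
      ∑ v : Fin n → Bool, ∏ j, φ j (v j) = 1 := by
    intro φ hφ
    have h1 := Finset.prod_univ_sum (fun _ : Fin n => (Finset.univ : Finset Bool)) φ
    rw [Fintype.piFinset_univ] at h1
    rw [← h1]
    exact Finset.prod_eq_one fun j _ => by rw [Fintype.sum_bool]; exact hφ j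
  have h2 := key (fun j b =>
      if pending h j then (if b = true then F j (personal h j) else 1 - F j (personal h j))
      else (if b = true then 0 else 1)) ?_
  · exact h2
  · intro j
    by_cases hp : pending h j
    · simp only [hp, if_true, if_pos rfl]
      simp
    · simp [hp]

lemma contProb_nil (F : Fin n → Protocol) (h : Hist n) : contProb F h [] = 1 := by
  simp [contProb]

lemma contProb_cons (F : Fin n → Protocol) (h : Hist n) (v : Fin n → Bool) (e : Hist n) :
    contProb F h (v :: e) = stepProb F h v * contProb F (h ++ [v]) e := by
  unfold contProb
  rw [List.length_cons, Finset.prod_range_succ']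
  have h0 : stepProb F (h ++ (v :: e).take 0) ((v :: e).getD 0 fun _ => false) = stepProb F h v := by
    simp
  have h2 : ∀ t ∈ Finset.range e.length,
      stepProb F (h ++ (v :: e).take (t+1)) ((v :: e).getD (t+1) fun _ => false)
        = stepProb F ((h ++ [v]) ++ e.take t) (e.getD t fun _ => false) := fun t _ => by
    rw [List.take_succ_cons, List.getD_cons_succ, List.append_cons h v (e.take t)]
  rw [Finset.prod_congr rfl h2, h0, mul_comm]

lemma contProb_append (F : Fin n → Protocol) (e₁ : Hist n) : ∀ (h e₂ : Hist n),
    contProb F h (e₁ ++ e₂) = contProb F h e₁ * contProb F (h ++ e₁) e₂ := by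
  induction e₁ with
  | nil => intro h e₂; simp [contProb_nil]
  | cons v e ih =>
    intro h e₂
    rw [List.cons_append, contProb_cons, contProb_cons, ih, mul_assoc, List.append_cons h v e]

lemma contProb_nonneg {F : Fin n → Protocol} (hF : ∀ j, ValidProtocol (F j))
    (h e : Hist n) : 0 ≤ contProb F h e :=
  Finset.prod_nonneg fun t _ => stepProb_nonneg hF _ _

lemma histProb_nonneg {F : Fin n → Protocol} (hF : ∀ j, ValidProtocol (F j))
    (h : Hist n) : 0 ≤ histProb F h := contProb_nonneg hF _ _

lemma condPendProb_zero (F : Fin n → Protocol) (h : Hist n) (i : Fin n) :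
    condPendProb F h i 0 = if pending h i then 1 else 0 := by
  unfold condPendProb
  rw [Fintype.sum_unique]
  simp [contProb_nil]

lemma condPendProb_succ (F : Fin n → Protocol) (h : Hist n) (i : Fin n) (s : ℕ) :
    condPendProb F h i (s + 1)
      = ∑ v : Fin n → Bool, stepProb F h v * condPendProb F (h ++ [v]) i s := by
  classical
  unfold condPendProb
  rw [← Equiv.sum_comp (Fin.consEquiv (fun _ : Fin (s+1) => (Fin n → Bool)))]
  rw [Fintype.sum_prod_type]
  refine Finset.sum_congr rfl fun v _ => ?_
  rw [Finset.mul_sum]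
  refine Finset.sum_congr rfl fun e _ => ?_
  have hofn : List.ofFn ((Fin.consEquiv fun _ => (Fin n → Bool)) (v, e)) = v :: List.ofFn e := by
    rw [List.ofFn_succ]
    congr
  rw [hofn, contProb_cons, List.append_cons, mul_ite, mul_zero]

lemma condPendProb_nonneg {F : Fin n → Protocol} (hF : ∀ j, ValidProtocol (F j))
    (h : Hist n) (i : Fin n) (s : ℕ) : 0 ≤ condPendProb F h i s := by
  apply Finset.sum_nonneg
  intro e _
  split_ifs
  · exact contProb_nonneg hF _ _
  · exact le_refl 0


lemma histProb_mul_le {F : Fin n → Protocol} (hF : ∀ j, ValidProtocol (F j)) (i : Fin n)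
    (h : Hist n) : ∀ s : ℕ,
    histProb F h * condPendProb F h i s ≤ condPendProb F [] i (h.length + s) := by
  induction h using List.reverseRecOn with
  | nil => intro s; simp [histProb, contProb_nil]
  | append_singleton l v ih =>
    intro s
    have h1 : histProb F (l ++ [v]) = histProb F l * stepProb F l v := by
      unfold histProb
      rw [contProb_append, contProb_cons, contProb_nil, mul_one, List.nil_append]
    have h2 : stepProb F l v * condPendProb F (l ++ [v]) i s ≤ condPendProb F l i (s + 1) := by
      rw [condPendProb_succ]
      exact Finset.single_le_sum
        (f := fun w : Fin n → Bool => stepProb F l w * condPendProb F (l ++ [w]) i s)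
        (fun w _ => mul_nonneg (stepProb_nonneg hF _ _) (condPendProb_nonneg hF _ _ _))
        (Finset.mem_univ v)
    have h3 : histProb F l * (stepProb F l v * condPendProb F (l ++ [v]) i s)
        ≤ histProb F l * condPendProb F l i (s + 1) :=
      mul_le_mul_of_nonneg_left h2 (histProb_nonneg hF l)
    have hlen : l.length + (s + 1) = (l ++ [v]).length + s := by
      simp [List.length_append]; omega
    rw [h1, mul_assoc]
    calc histProb F l * (stepProb F l v * condPendProb F (l ++ [v]) i s)
        ≤ histProb F l * condPendProb F l i (s + 1) := h3
      _ ≤ condPendProb F [] i (l.length + (s + 1)) := ih (s + 1)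
      _ = condPendProb F [] i ((l ++ [v]).length + s) := by rw [hlen]

lemma stepProb_congr {F F' : Fin n → Protocol} (h : Hist n)
    (hag : ∀ j, F j (personal h j) = F' j (personal h j)) (v : Fin n → Bool) :
    stepProb F h v = stepProb F' h v := by
  unfold stepProb
  exact Finset.prod_congr rfl fun j _ => by rw [hag j]

lemma contProb_congr {F F' : Fin n → Protocol} {L : ℕ}
    (hag : ∀ (j : Fin n) (w : List Bool), L ≤ w.length → F j w = F' j w)
    (h : Hist n) (hL : L ≤ h.length) (e : Hist n) :
    contProb F h e = contProb F' h e := by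
  unfold contProb
  refine Finset.prod_congr rfl fun t _ => stepProb_congr _ (fun j => hag j _ ?_) _
  rw [personal_length, List.length_append]
  omega

lemma condPendProb_congr {F F' : Fin n → Protocol} {L : ℕ}
    (hag : ∀ (j : Fin n) (w : List Bool), L ≤ w.length → F j w = F' j w)
    (h : Hist n) (hL : L ≤ h.length) (i : Fin n) (s : ℕ) :
    condPendProb F h i s = condPendProb F' h i s := by
  unfold condPendProb
  exact Finset.sum_congr rfl fun e _ => by rw [contProb_congr hag h hL]

noncomputable def tailLat (F : Fin n → Protocol) (h : Hist n) (i : Fin n) : ℝ≥0∞ :=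
  ∑' s : ℕ, ENNReal.ofReal (condPendProb F h i (s + 1))

noncomputable def prefixLat (h : Hist n) (i : Fin n) : ℝ≥0∞ :=
  ∑ s ∈ Finset.range (h.length + 1), (if pending (h.take s) i then 1 else 0)

lemma prefixLat_ne_top (h : Hist n) (i : Fin n) : prefixLat h i ≠ ⊤ := by
  have hle : prefixLat h i ≤ ((h.length + 1 : ℕ) : ℝ≥0∞) := by
    calc prefixLat h i ≤ ∑ _s ∈ Finset.range (h.length + 1), (1 : ℝ≥0∞) :=
          Finset.sum_le_sum fun s _ => by split_ifs <;> simp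
      _ = ((h.length + 1 : ℕ) : ℝ≥0∞) := by simp
  exact ne_top_of_le_ne_top (ENNReal.natCast_ne_top _) hle

lemma condLatency_eq (F : Fin n → Protocol) (h : Hist n) (i : Fin n) :
    condLatency F h i = prefixLat h i + tailLat F h i := by
  unfold condLatency prefixLat tailLat
  rw [← Summable.sum_add_tsum_nat_add' (f := fun s : ℕ =>
      if s ≤ h.length then (if pending (h.take s) i then (1:ℝ≥0∞) else 0)
      else ENNReal.ofReal (condPendProb F h i (s - h.length))) (k := h.length + 1)
      ENNReal.summable]
  congr 1
  · refine Finset.sum_congr rfl fun s hs => ?_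
    have hs' : s ≤ h.length := by
      have := Finset.mem_range.mp hs
      omega
    rw [if_pos hs']
  · refine tsum_congr fun s => ?_
    rw [if_neg (by omega)]
    have harith : s + (h.length + 1) - h.length = s + 1 := by omega
    rw [harith]


/-- deviation protocol: play `c` at (personal-history-)length `L`, follow the backoff
protocol otherwise. -/
def dev (q : ℕ → ℝ) (L : ℕ) (c : ℝ) : Protocol :=
  fun w => if w.length = L then c else q (w.count true)

lemma dev_valid {q : ℕ → ℝ} (hq : ∀ k, 0 ≤ q k ∧ q k ≤ 1) (L : ℕ) {c : ℝ}
    (hc0 : 0 ≤ c) (hc1 : c ≤ 1) : ValidProtocol (dev q L c) := by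
  intro w
  unfold dev
  split_ifs
  · exact ⟨hc0, hc1⟩
  · exact hq _

lemma update_valid {F : Fin n → Protocol} (hF : ∀ j, ValidProtocol (F j)) {g : Protocol}
    (hg : ValidProtocol g) (i : Fin n) : ∀ j, ValidProtocol (Function.update F i g j) := by
  intro j
  rcases eq_or_ne j i with rfl | hj
  · rw [Function.update_self]; exact hg
  · rw [Function.update_of_ne hj]; exact hF j

lemma update_dev_agree {q : ℕ → ℝ} {F : Fin n → Protocol} (hqF : ∀ j, F j = backoffProtocol q)
    (i : Fin n) (L : ℕ) (c : ℝ) :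
    ∀ (j : Fin n) (w : List Bool), L + 1 ≤ w.length → Function.update F i (dev q L c) j w = F j w := by
  intro j w hw
  rcases eq_or_ne j i with rfl | hj
  · rw [Function.update_self, hqF j]
    unfold dev backoffProtocol
    rw [if_neg (by omega)]
  · rw [Function.update_of_ne hj]

lemma stepProb_pending (F : Fin n → Protocol) (i : Fin n) (h : Hist n) (hp : pending h i)
    (v : Fin n → Bool) :
    stepProb F h v = (if v i = true then F i (personal h i) else 1 - F i (personal h i))
      * ∏ j ∈ Finset.univ.erase i,
          (if pending h j then (if v j = true then F j (personal h j) else 1 - F j (personal h j))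
           else (if v j = true then (0:ℝ) else 1)) := by
  unfold stepProb
  rw [← Finset.mul_prod_erase Finset.univ _ (Finset.mem_univ i), if_pos hp]

lemma stepProb_update_pending (F : Fin n → Protocol) (g : Protocol) (i : Fin n) (h : Hist n)
    (hp : pending h i) (v : Fin n → Bool) :
    stepProb (Function.update F i g) h v
      = (if v i = true then g (personal h i) else 1 - g (personal h i))
        * ∏ j ∈ Finset.univ.erase i,
            (if pending h j then (if v j = true then F j (personal h j) else 1 - F j (personal h j))
             else (if v j = true then (0:ℝ) else 1)) := by
  unfold stepProb
  rw [← Finset.mul_prod_erase Finset.univ _ (Finset.mem_univ i), if_pos hp, Function.update_self]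
  congr 1
  refine Finset.prod_congr rfl fun j hj => ?_
  rw [Function.update_of_ne (Finset.ne_of_mem_erase hj)]

lemma step_factor {q : ℕ → ℝ} {F : Fin n → Protocol} (hqF : ∀ j, F j = backoffProtocol q)
    (i : Fin n) (h : Hist n) (hp : pending h i) (v : Fin n → Bool) :
    stepProb F h v
      = q ((personal h i).count true)
          * stepProb (Function.update F i (dev q h.length 1)) h v
        + (1 - q ((personal h i).count true))
          * stepProb (Function.update F i (dev q h.length 0)) h v := by
  classical
  rw [stepProb_pending F i h hp v, stepProb_update_pending F _ i h hp v,
      stepProb_update_pending F _ i h hp v]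
  rw [show dev q h.length 1 (personal h i) = 1 from by simp [dev, personal_length],
      show dev q h.length 0 (personal h i) = 0 from by simp [dev, personal_length],
      hqF i]
  unfold backoffProtocol
  cases hv : v i
  · simp only [Bool.false_eq_true, if_false]
    ring
  · simp only [if_true]
    ring

lemma stepC_zero {q : ℕ → ℝ} {F : Fin n → Protocol} (i : Fin n) (h : Hist n)
    (hp : pending h i) (v : Fin n → Bool) (hv : v i = true) :
    stepProb (Function.update F i (dev q h.length 0)) h v = 0 := by
  unfold stepProb
  apply Finset.prod_eq_zero (Finset.mem_univ i)
  rw [if_pos hp, if_pos hv, Function.update_self]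
  simp [dev, personal_length]

end Aux

/-- For `n ≥ 2` players, there is no anonymous backoff
acknowledgment-based protocol that is in equilibrium and gives every player finite
expected latency. -/
theorem no_backoff_equilibrium_with_finite_latency :
    ∀ (n : ℕ) (q : ℕ → ℝ), 2 ≤ n →
      (∀ k : ℕ, 0 ≤ q k ∧ q k ≤ 1) →
      (∀ i : Fin n, condLatency (fun _ : Fin n => backoffProtocol q) [] i < ⊤) →
      ¬ IsEquilibrium (fun _ : Fin n => backoffProtocol q) := by
  intro n q hn hq hfin hEq
  classical
  set F : Fin n → Protocol := fun _ : Fin n => backoffProtocol q with hFdef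
  have hqF : ∀ j : Fin n, F j = backoffProtocol q := fun j => rfl
  have hFvalid : ∀ j : Fin n, ValidProtocol (F j) := fun j w => hq (w.count true)
  set i : Fin n := ⟨0, by omega⟩ with hidef
  -- nobody is alone when everybody transmits
  have hnotalone : ∀ j : Fin n, ¬ alone (fun _ : Fin n => true) j := by
    intro j hal
    obtain ⟨j', hj'⟩ : ∃ j' : Fin n, j' ≠ j := by
      rcases Nat.lt_or_ge 0 j.val with h0 | h0
      · exact ⟨⟨0, by omega⟩, by simp [Fin.ext_iff]; omega⟩
      · exact ⟨⟨1, by omega⟩, by simp [Fin.ext_iff]; omega⟩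
    have := hal.2 j' hj'
    simp at this
  have hpend_of_all : ∀ h : Hist n,
      (∀ u ∈ h, u = (fun _ : Fin n => true) ∨ u = (fun _ : Fin n => false)) →
      ∀ j, pending h j := by
    intro h hu j u hmem hal
    rcases hu u hmem with rfl | rfl
    · exact hnotalone j hal
    · have := hal.1
      simp at this
  have hrep_pend : ∀ (m : ℕ) (j : Fin n),
      pending (List.replicate m (fun _ : Fin n => true)) j :=
    fun m j => hpend_of_all _ (fun u hu => Or.inl (List.eq_of_mem_replicate hu)) j
  have hrep_count : ∀ (m : ℕ) (j : Fin n),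
      (personal (List.replicate m (fun _ : Fin n => true)) j).count true = m := by
    intro m j
    unfold personal
    rw [List.map_replicate]
    simp
  -- histProb of the all-transmit prefix
  have hhist_rep : ∀ m : ℕ, (∀ t, t < m → q t = 1) →
      histProb F (List.replicate m (fun _ : Fin n => true)) = 1 := by
    intro m hm
    unfold histProb contProb
    rw [List.length_replicate]
    apply Finset.prod_eq_one
    intro t ht
    have ht' : t < m := Finset.mem_range.mp ht
    have htake : ([] : Hist n) ++ (List.replicate m (fun _ : Fin n => true)).take t
        = List.replicate t (fun _ : Fin n => true) := by
      rw [List.nil_append, List.take_replicate]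
      congr 1
      omega
    have hgetD : (List.replicate m (fun _ : Fin n => true)).getD t (fun _ => false)
        = (fun _ : Fin n => true) := by
      rw [List.getD_eq_getElem _ _ (by simpa using ht')]
      simp
    rw [htake, hgetD]
    unfold stepProb
    apply Finset.prod_eq_one
    intro j _
    rw [if_pos (hrep_pend t j), if_pos rfl, hqF j]
    unfold backoffProtocol
    rw [hrep_count t j]
    exact hm t ht'
  -- finiteness transfer
  have hcl_nil : condLatency F [] i ≠ ⊤ := (hfin i).ne
  have htail_nil : tailLat F [] i ≠ ⊤ := by
    intro htop
    rw [condLatency_eq, htop, add_top] at hcl_nil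
    exact hcl_nil rfl
  have htail_fin : ∀ h : Hist n, 0 < histProb F h → tailLat F h i ≠ ⊤ := by
    intro h hpos htop
    have key : ∀ s : ℕ,
        ENNReal.ofReal (histProb F h) * ENNReal.ofReal (condPendProb F h i (s + 1))
          ≤ ENNReal.ofReal (condPendProb F [] i (s + h.length + 1)) := by
      intro s
      rw [← ENNReal.ofReal_mul (histProb_nonneg hFvalid h)]
      apply ENNReal.ofReal_le_ofReal
      have h2 := histProb_mul_le hFvalid i h (s + 1)
      have h3 : h.length + (s + 1) = s + h.length + 1 := by omega
      rw [h3] at h2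
      exact h2
    have hle : ENNReal.ofReal (histProb F h) * tailLat F h i ≤ tailLat F [] i := by
      unfold tailLat
      rw [← ENNReal.tsum_mul_left]
      refine le_trans (ENNReal.tsum_le_tsum key) ?_
      have h4 := Summable.sum_add_tsum_nat_add'
        (f := fun s : ℕ => ENNReal.ofReal (condPendProb F [] i (s + 1))) (k := h.length)
        ENNReal.summable
      calc ∑' s : ℕ, ENNReal.ofReal (condPendProb F [] i (s + h.length + 1))
          = ∑' s : ℕ, (fun t : ℕ => ENNReal.ofReal (condPendProb F [] i (t + 1))) (s + h.length) := rfl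
        _ ≤ _ := by rw [← h4]; exact le_add_self
    rw [htop, ENNReal.mul_top (ENNReal.ofReal_pos.mpr hpos).ne'] at hle
    exact htail_nil (top_le_iff.mp hle)
  -- there is some k with q k < 1
  have hex : ∃ k, q k < 1 := by
    by_contra hno
    push_neg at hno
    have hq1 : ∀ t, q t = 1 := fun t => le_antisymm (hq t).2 (hno t)
    have hone : ∀ m : ℕ, (1 : ℝ) ≤ condPendProb F [] i m := by
      intro m
      have h2 := histProb_mul_le hFvalid i (List.replicate m (fun _ : Fin n => true)) 0
      rw [condPendProb_zero, if_pos (hrep_pend m i), hhist_rep m (fun t _ => hq1 t)] at h2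
      simpa using h2
    obtain ⟨m, hm⟩ := ENNReal.exists_nat_gt htail_nil
    have hge : (m : ℝ≥0∞) ≤ tailLat F [] i := by
      calc (m : ℝ≥0∞) = ∑ _s ∈ Finset.range m, 1 := by simp
        _ ≤ ∑ s ∈ Finset.range m, ENNReal.ofReal (condPendProb F [] i (s + 1)) :=
            Finset.sum_le_sum fun s _ => ENNReal.one_le_ofReal.mpr (hone (s + 1))
        _ ≤ tailLat F [] i := ENNReal.sum_le_tsum _
    exact absurd hm (not_lt.mpr hge)
  set k0 := Nat.find hex with hk0def
  have hklt : q k0 < 1 := Nat.find_spec hex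
  have hkmin : ∀ t, t < k0 → q t = 1 := fun t ht =>
    le_antisymm (hq t).2 (not_lt.mp (Nat.find_min hex ht))
  have hhist_star : histProb F (List.replicate k0 (fun _ : Fin n => true)) = 1 :=
    hhist_rep k0 hkmin
  have hpos_star : 0 < histProb F (List.replicate k0 (fun _ : Fin n => true)) := by
    rw [hhist_star]; norm_num
  -- q k0 > 0
  have hp0 : 0 < q k0 := by
    rcases (hq k0).1.lt_or_eq with hlt | heq0
    · exact hlt
    · exfalso
      have hzero : q k0 = 0 := heq0.symm
      have claim : ∀ (s : ℕ) (h' : Hist n),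
          (∀ j, pending h' j ∧ (personal h' j).count true = k0) →
          (1 : ℝ) ≤ condPendProb F h' i s := by
        intro s
        induction s with
        | zero =>
          intro h' hh
          rw [condPendProb_zero, if_pos (hh i).1]
        | succ s ih =>
          intro h' hh
          rw [condPendProb_succ]
          have hstep : stepProb F h' (fun _ : Fin n => false) = 1 := by
            unfold stepProb
            apply Finset.prod_eq_one
            intro j _
            rw [if_pos (hh j).1]
            simp only [Bool.false_eq_true, if_false]
            rw [hqF j]
            unfold backoffProtocol
            rw [(hh j).2, hzero]
            ring
          have hterm : (1 : ℝ) ≤ stepProb F h' (fun _ : Fin n => false)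
              * condPendProb F (h' ++ [fun _ : Fin n => false]) i s := by
            rw [hstep, one_mul]
            apply ih
            intro j
            constructor
            · intro u hu hal
              rcases List.mem_append.mp hu with hu | hu
              · exact (hh j).1 u hu hal
              · have : u = (fun _ : Fin n => false) := by simpa using hu
                subst this
                have := hal.1
                simp at this
            · rw [personal_append, List.count_append]
              have hpers : personal [fun _ : Fin n => false] j = [false] := rfl
              rw [hpers]
              simp [(hh j).2]
          calc (1 : ℝ) ≤ _ := hterm
            _ ≤ ∑ v : Fin n → Bool, stepProb F h' v * condPendProb F (h' ++ [v]) i s :=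
              Finset.single_le_sum
                (f := fun w : Fin n → Bool => stepProb F h' w * condPendProb F (h' ++ [w]) i s)
                (fun w _ => mul_nonneg (stepProb_nonneg hFvalid _ _)
                  (condPendProb_nonneg hFvalid _ _ _))
                (Finset.mem_univ _)
      have hstar_prop : ∀ j : Fin n,
          pending (List.replicate k0 (fun _ : Fin n => true)) j ∧
          (personal (List.replicate k0 (fun _ : Fin n => true)) j).count true = k0 :=
        fun j => ⟨hrep_pend k0 j, hrep_count k0 j⟩
      obtain ⟨m, hm⟩ := ENNReal.exists_nat_gt (htail_fin _ hpos_star)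
      have hge : (m : ℝ≥0∞) ≤ tailLat F (List.replicate k0 (fun _ : Fin n => true)) i := by
        calc (m : ℝ≥0∞) = ∑ _s ∈ Finset.range m, 1 := by simp
          _ ≤ ∑ s ∈ Finset.range m, ENNReal.ofReal
                (condPendProb F (List.replicate k0 (fun _ : Fin n => true)) i (s + 1)) :=
              Finset.sum_le_sum fun s _ =>
                ENNReal.one_le_ofReal.mpr (claim (s + 1) _ hstar_prop)
          _ ≤ _ := ENNReal.sum_le_tsum _
      exact absurd hm (not_lt.mpr hge)
  -- main induction
  have main : ∀ m : ℕ, ∀ h : Hist n, 0 < histProb F h → pending h i →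
      (personal h i).count true = k0 → (m : ℝ≥0∞) ≤ tailLat F h i := by
    intro m
    induction m with
    | zero => intro h _ _ _; simp
    | succ m ih =>
      intro h hpos hpend hcount
      set FD := Function.update F i (dev q h.length 1) with hFDdef
      set FC := Function.update F i (dev q h.length 0) with hFCdef
      have hFDvalid : ∀ j, ValidProtocol (FD j) :=
        update_valid hFvalid (dev_valid hq _ zero_le_one le_rfl) i
      have hFCvalid : ∀ j, ValidProtocol (FC j) :=
        update_valid hFvalid (dev_valid hq _ le_rfl zero_le_one) i
      have hagD := update_dev_agree hqF i h.length 1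
      have hagC := update_dev_agree hqF i h.length 0
      have hlen1 : ∀ v : Fin n → Bool, h.length + 1 ≤ (h ++ [v]).length := by
        intro v; simp
      have hcppD : ∀ (v : Fin n → Bool) (s : ℕ),
          condPendProb FD (h ++ [v]) i s = condPendProb F (h ++ [v]) i s :=
        fun v s => condPendProb_congr hagD _ (hlen1 v) i s
      have hcppC : ∀ (v : Fin n → Bool) (s : ℕ),
          condPendProb FC (h ++ [v]) i s = condPendProb F (h ++ [v]) i s :=
        fun v s => condPendProb_congr hagC _ (hlen1 v) i s
      -- pointwise decomposition
      have hpt : ∀ s : ℕ, condPendProb F h i (s + 1)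
          = q k0 * condPendProb FD h i (s + 1) + (1 - q k0) * condPendProb FC h i (s + 1) := by
        intro s
        rw [condPendProb_succ, condPendProb_succ, condPendProb_succ,
            Finset.mul_sum, Finset.mul_sum, ← Finset.sum_add_distrib]
        refine Finset.sum_congr rfl fun v _ => ?_
        rw [hcppD, hcppC, step_factor hqF i h hpend v, hcount]
        ring
      -- equilibrium: honest ≤ transmit-now deviation
      have hab : tailLat F h i ≤ tailLat FD h i := by
        have heq := hEq i h hpos (dev q h.length 1) (dev_valid hq _ zero_le_one le_rfl)
        rw [condLatency_eq, condLatency_eq] at heq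
        exact (ENNReal.add_le_add_iff_left (prefixLat_ne_top h i)).mp heq
      have hfa : tailLat F h i ≠ ⊤ := htail_fin h hpos
      -- a = p b + (1-p) c
      have ha : tailLat F h i
          = ENNReal.ofReal (q k0) * tailLat FD h i
            + ENNReal.ofReal (1 - q k0) * tailLat FC h i := by
        unfold tailLat
        rw [← ENNReal.tsum_mul_left, ← ENNReal.tsum_mul_left, ← ENNReal.tsum_add]
        refine tsum_congr fun s => ?_
        rw [hpt s,
            ENNReal.ofReal_add (mul_nonneg hp0.le (condPendProb_nonneg hFDvalid _ _ _))
              (mul_nonneg (by linarith) (condPendProb_nonneg hFCvalid _ _ _)),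
            ENNReal.ofReal_mul hp0.le, ENNReal.ofReal_mul (by linarith : (0:ℝ) ≤ 1 - q k0)]
      -- c ≤ a
      have hca : tailLat FC h i ≤ tailLat F h i := by
        have hsum : ENNReal.ofReal (q k0) + ENNReal.ofReal (1 - q k0) = 1 := by
          rw [← ENNReal.ofReal_add hp0.le (by linarith)]
          norm_num
        have hsplit : tailLat F h i
            = ENNReal.ofReal (q k0) * tailLat F h i
              + ENNReal.ofReal (1 - q k0) * tailLat F h i := by
          rw [← add_mul, hsum, one_mul]
        have h1 : ENNReal.ofReal (q k0) * tailLat F h i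
            + ENNReal.ofReal (1 - q k0) * tailLat FC h i
            ≤ ENNReal.ofReal (q k0) * tailLat F h i
              + ENNReal.ofReal (1 - q k0) * tailLat F h i := by
          calc ENNReal.ofReal (q k0) * tailLat F h i
                + ENNReal.ofReal (1 - q k0) * tailLat FC h i
              ≤ ENNReal.ofReal (q k0) * tailLat FD h i
                + ENNReal.ofReal (1 - q k0) * tailLat FC h i :=
                add_le_add_left (mul_le_mul_right hab _) _
            _ = tailLat F h i := ha.symm
            _ = _ := hsplit
        have h2 := (ENNReal.add_le_add_iff_left
          (ENNReal.mul_ne_top ENNReal.ofReal_ne_top hfa)).mp h1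
        exact (ENNReal.mul_le_mul_iff_right
          (ENNReal.ofReal_pos.mpr (by linarith : (0:ℝ) < 1 - q k0)).ne'
          ENNReal.ofReal_ne_top).mp h2
      -- lower bound on c by recursion
      have hrec : ((m : ℝ≥0∞) + 1) ≤ tailLat FC h i := by
        have hterm : ∀ v : Fin n → Bool,
            ENNReal.ofReal (stepProb FC h v) * ((m : ℝ≥0∞) + 1)
              ≤ ENNReal.ofReal (stepProb FC h v) *
                  (ENNReal.ofReal (condPendProb F (h ++ [v]) i 0) + tailLat F (h ++ [v]) i) := by
          intro v
          by_cases hz : stepProb FC h v = 0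
          · simp [hz]
          · have hvi : v i = false := by
              cases hvv : v i
              · rfl
              · exact absurd (stepC_zero i h hpend v hvv) hz
            have hpend' : pending (h ++ [v]) i := by
              intro u hu hal
              rcases List.mem_append.mp hu with hu | hu
              · exact hpend u hu hal
              · have : u = v := by simpa using hu
                subst this
                rw [hal.1] at hvi
                cases hvi
            have hcount' : (personal (h ++ [v]) i).count true = k0 := by
              rw [personal_append, List.count_append]
              have hpers : personal [v] i = [v i] := rfl
              rw [hpers, hvi]
              simp [hcount]
            have hpos' : 0 < histProb F (h ++ [v]) := by
              have hsplit2 : histProb F (h ++ [v]) = histProb F h * stepProb F h v := by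
                unfold histProb
                rw [contProb_append, contProb_cons, contProb_nil, mul_one, List.nil_append]
              have hfac := step_factor hqF i h hpend v
              rw [hcount] at hfac
              have h0D : 0 ≤ stepProb FD h v := stepProb_nonneg hFDvalid _ _
              have h0C : 0 ≤ stepProb FC h v := stepProb_nonneg hFCvalid _ _
              have hCpos : 0 < stepProb FC h v := lt_of_le_of_ne h0C (Ne.symm hz)
              have hstep_pos : 0 < stepProb F h v := by
                rw [hfac]
                nlinarith
              rw [hsplit2]
              exact mul_pos hpos hstep_pos
            have hchild := ih (h ++ [v]) hpos' hpend' hcount'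
            have hcpp0 : condPendProb F (h ++ [v]) i 0 = 1 := by
              rw [condPendProb_zero, if_pos hpend']
            rw [hcpp0, ENNReal.ofReal_one]
            refine mul_le_mul_right ?_ _
            calc (m : ℝ≥0∞) + 1 = 1 + (m : ℝ≥0∞) := by rw [add_comm]
              _ ≤ 1 + tailLat F (h ++ [v]) i := add_le_add_right hchild _
        have hsum1 : ∑ v : Fin n → Bool, ENNReal.ofReal (stepProb FC h v) = 1 := by
          rw [← ENNReal.ofReal_sum_of_nonneg (fun v _ => stepProb_nonneg hFCvalid _ _),
              stepProb_sum, ENNReal.ofReal_one]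
        calc ((m : ℝ≥0∞) + 1)
            = ∑ v : Fin n → Bool, ENNReal.ofReal (stepProb FC h v) * ((m : ℝ≥0∞) + 1) := by
              rw [← Finset.sum_mul, hsum1, one_mul]
          _ ≤ ∑ v : Fin n → Bool, ENNReal.ofReal (stepProb FC h v) *
                (ENNReal.ofReal (condPendProb F (h ++ [v]) i 0) + tailLat F (h ++ [v]) i) :=
              Finset.sum_le_sum fun v _ => hterm v
          _ = ∑ v : Fin n → Bool, ∑' s : ℕ,
                ENNReal.ofReal (stepProb FC h v * condPendProb F (h ++ [v]) i s) := by
              refine Finset.sum_congr rfl fun v _ => ?_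
              have hsplit3 : ∑' s : ℕ,
                  ENNReal.ofReal (stepProb FC h v * condPendProb F (h ++ [v]) i s)
                  = ENNReal.ofReal (stepProb FC h v)
                    * ∑' s : ℕ, ENNReal.ofReal (condPendProb F (h ++ [v]) i s) := by
                rw [← ENNReal.tsum_mul_left]
                exact tsum_congr fun s => ENNReal.ofReal_mul (stepProb_nonneg hFCvalid _ _)
              rw [hsplit3]
              congr 1
              rw [tsum_eq_zero_add' ENNReal.summable]
              rfl
          _ = ∑' s : ℕ, ∑ v : Fin n → Bool,
                ENNReal.ofReal (stepProb FC h v * condPendProb F (h ++ [v]) i s) :=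
              (Summable.tsum_finsetSum fun _ _ => ENNReal.summable).symm
          _ ≤ tailLat FC h i := by
              unfold tailLat
              refine ENNReal.tsum_le_tsum fun s => ?_
              have he1 : condPendProb FC h i (s + 1)
                  = ∑ v : Fin n → Bool, stepProb FC h v * condPendProb F (h ++ [v]) i s := by
                rw [condPendProb_succ]
                exact Finset.sum_congr rfl fun v _ => by rw [hcppC]
              rw [he1, ENNReal.ofReal_sum_of_nonneg (fun v _ =>
                mul_nonneg (stepProb_nonneg hFCvalid _ _) (condPendProb_nonneg hFvalid _ _ _))]
      have : ((m : ℝ≥0∞) + 1) ≤ tailLat F h i := hrec.trans hca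
      calc ((m + 1 : ℕ) : ℝ≥0∞) = (m : ℝ≥0∞) + 1 := by push_cast; ring
        _ ≤ tailLat F h i := this
  -- final contradiction
  obtain ⟨m, hm⟩ := ENNReal.exists_nat_gt (htail_fin _ hpos_star)
  exact absurd hm (not_lt.mpr
    (main m (List.replicate k0 (fun _ : Fin n => true)) hpos_star
      (hrep_pend k0 i) (hrep_count k0 i)))

end Contention
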